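/- Let S be a semaphore code over A with associated right action s.a = the unique suffix of sa lying in S, and let π be a positive Bernoulli distribution on A (so π(s) = ∏_{letters a of s} π(a) and ∑_{s∈S} π(s) = 1). Then the vector I = (π(s))_{s∈S} is stationary for the transition matrix T with T_{s,s'} = ∑_{a : s.a = s'} π(a); that is, for every s' ∈ S, ∑_{s∈S} ∑_{a : s.a = s'} π(a) π(s) = π(s'). -/

import Mathlib

set_option maxHeartbeats 800000


/-- A suffix code: an antichain with respect to the suffix order. -/
def SuffixCode {A : Type*} (S : Set (List A)) : Prop :=
  ∀ u ∈ S, ∀ v ∈ S, u <:+ v → u = v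

/-- The multiplicative extension of a probability distribution on letters to words. -/
def piW {A : Type*} (π : A → ℝ) (w : List A) : ℝ := (w.map π).prod

namespace SemaphoreProofAux

open Filter

variable {A : Type*} [Fintype A] [DecidableEq A]

lemma piW_nil (π : A → ℝ) : piW π ([] : List A) = 1 := rfl

lemma piW_append (π : A → ℝ) (x y : List A) : piW π (x ++ y) = piW π x * piW π y := by
  simp [piW]

lemma piW_cons (π : A → ℝ) (a : A) (v : List A) : piW π (a :: v) = π a * piW π v := by
  simp [piW]

lemma piW_nonneg {π : A → ℝ} (hpos : ∀ a : A, 0 < π a) (v : List A) : 0 ≤ piW π v := by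
  refine List.prod_nonneg fun x hx => ?_
  obtain ⟨a, -, rfl⟩ := List.mem_map.mp hx
  exact (hpos a).le

/-- The finset of all words of length `j`. -/
def LL (A : Type*) [Fintype A] [DecidableEq A] (j : ℕ) : Finset (List A) :=
  (Finset.univ : Finset (Fin j → A)).image List.ofFn

/-- The finset of all words of length at most `k`. -/
def WW (A : Type*) [Fintype A] [DecidableEq A] (k : ℕ) : Finset (List A) :=
  (Finset.range (k+1)).biUnion (LL A)

lemma mem_LL {j : ℕ} {v : List A} : v ∈ LL A j ↔ v.length = j := by
  constructor
  · intro h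
    obtain ⟨x, -, rfl⟩ := Finset.mem_image.mp h
    simp
  · intro h
    subst h
    exact Finset.mem_image.mpr ⟨v.get, Finset.mem_univ _, List.ofFn_get v⟩

lemma mem_WW {k : ℕ} {v : List A} : v ∈ WW A k ↔ v.length ≤ k := by
  simp only [WW, Finset.mem_biUnion, Finset.mem_range, mem_LL]
  constructor
  · rintro ⟨j, hj, rfl⟩; omega
  · intro h; exact ⟨v.length, by omega, rfl⟩

lemma sum_LL (π : A → ℝ) (hsum : ∑ a : A, π a = 1) (j : ℕ) :
    ∑ v ∈ LL A j, piW π v = 1 := by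
  rw [LL, Finset.sum_image (fun x _ y _ h => List.ofFn_injective h)]
  have : ∀ x : Fin j → A, piW π (List.ofFn x) = ∏ i : Fin j, π (x i) := by
    intro x
    rw [piW, List.map_ofFn, List.prod_ofFn]
    rfl
  simp only [this]
  rw [← Fintype.piFinset_univ, ← Finset.prod_univ_sum]
  simp [hsum]

lemma LL_succ (k : ℕ) :
    LL A (k+1) = ((LL A k) ×ˢ (Finset.univ : Finset A)).image (fun p => p.1 ++ [p.2]) := by
  ext v
  simp only [mem_LL, Finset.mem_image, Finset.mem_product, Finset.mem_univ, and_true]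
  constructor
  · intro h
    have hv : v ≠ [] := by intro hv; simp [hv] at h
    refine ⟨(v.dropLast, v.getLast hv), ?_, List.dropLast_append_getLast hv⟩
    simp only [mem_LL]
    have := (List.length_dropLast : v.dropLast.length = v.length - 1)
    omega
  · rintro ⟨⟨w, a⟩, hw, rfl⟩
    simp only [mem_LL] at hw
    simp [hw]

lemma append_singleton_inj {w₁ w₂ : List A} {a₁ a₂ : A} (h : w₁ ++ [a₁] = w₂ ++ [a₂]) :
    w₁ = w₂ ∧ a₁ = a₂ := by
  obtain ⟨h1, h2⟩ := List.append_inj' h rfl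
  exact ⟨h1, by simpa using h2⟩

lemma sum_LL_succ (g : List A → ℝ) (k : ℕ) :
    ∑ w ∈ LL A (k+1), g w = ∑ a : A, ∑ w ∈ LL A k, g (w ++ [a]) := by
  rw [LL_succ, Finset.sum_image]
  · rw [Finset.sum_product]
    exact Finset.sum_comm
  · rintro ⟨w₁, a₁⟩ - ⟨w₂, a₂⟩ - h
    obtain ⟨h1, h2⟩ := append_singleton_inj h
    exact Prod.ext h1 h2

lemma WW_succ (k : ℕ) :
    WW A (k+1) = insert []
      (((WW A k) ×ˢ (Finset.univ : Finset A)).image (fun p => p.1 ++ [p.2])) := by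
  ext v
  simp only [mem_WW, Finset.mem_insert, Finset.mem_image, Finset.mem_product,
    Finset.mem_univ, and_true]
  constructor
  · intro h
    rcases eq_or_ne v [] with hv | hv
    · exact Or.inl hv
    · refine Or.inr ⟨(v.dropLast, v.getLast hv), ?_, List.dropLast_append_getLast hv⟩
      simp only [mem_WW]
      have := (List.length_dropLast : v.dropLast.length = v.length - 1)
      have : v.length ≠ 0 := by simpa using hv
      omega
  · rintro (rfl | ⟨⟨w, a⟩, hw, rfl⟩)
    · simp
    · simp only [mem_WW] at hw
      simp only [List.length_append, List.length_singleton]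
      omega

lemma sum_WW_succ (g : List A → ℝ) (k : ℕ) :
    ∑ w ∈ WW A (k+1), g w = g [] + ∑ a : A, ∑ w ∈ WW A k, g (w ++ [a]) := by
  rw [WW_succ, Finset.sum_insert, Finset.sum_image]
  · rw [Finset.sum_product]
    rw [Finset.sum_comm]
  · rintro ⟨w₁, a₁⟩ - ⟨w₂, a₂⟩ - h
    obtain ⟨h1, h2⟩ := append_singleton_inj h
    exact Prod.ext h1 h2
  · simp

section Code

variable (π : A → ℝ) (S : Set (List A))

open Classical in
/-- indicator of membership in `S` times `piW`. -/
noncomputable def ind (v : List A) : ℝ := if v ∈ S then piW π v else 0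

open Classical in
/-- indicator of having no suffix in `S`, times `piW`. -/
noncomputable def bnd (v : List A) : ℝ := if ∀ t ∈ S, ¬ t <:+ v then piW π v else 0

open Classical in
noncomputable def Hfun (u v : List A) : ℝ := if u <:+ v then ind π S v else 0

noncomputable def Psum (k : ℕ) (u : List A) : ℝ := ∑ w ∈ WW A k, ind π S (w ++ u)

noncomputable def Nsum (k : ℕ) (u : List A) : ℝ := ∑ w ∈ LL A k, bnd π S (w ++ u)

variable {π S}

lemma ind_nonneg (hpos : ∀ a : A, 0 < π a) (v : List A) : 0 ≤ ind π S v := by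
  unfold ind; split
  · exact piW_nonneg hpos v
  · exact le_rfl

lemma bnd_nonneg (hpos : ∀ a : A, 0 < π a) (v : List A) : 0 ≤ bnd π S v := by
  unfold bnd; split
  · exact piW_nonneg hpos v
  · exact le_rfl

lemma Hfun_nonneg (hpos : ∀ a : A, 0 < π a) (u v : List A) : 0 ≤ Hfun π S u v := by
  unfold Hfun; split
  · exact ind_nonneg hpos v
  · exact le_rfl

lemma Hfun_le_ind (hpos : ∀ a : A, 0 < π a) (u v : List A) : Hfun π S u v ≤ ind π S v := by
  unfold Hfun; split
  · exact le_rfl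
  · exact ind_nonneg hpos v

lemma Nsum_nonneg (hpos : ∀ a : A, 0 < π a) (k : ℕ) (u : List A) : 0 ≤ Nsum π S k u :=
  Finset.sum_nonneg fun w _ => bnd_nonneg hpos _

lemma PsumS (hcode : SuffixCode S) {u : List A} (hu : u ∈ S) (k : ℕ) :
    Psum π S k u = piW π u := by
  unfold Psum
  rw [Finset.sum_eq_single_of_mem ([] : List A) (mem_WW.mpr (Nat.zero_le k))]
  · simp only [List.nil_append]
    unfold ind
    rw [if_pos hu]
  · intro w _ hw
    unfold ind
    rw [if_neg]
    intro hmem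
    have := hcode u hu (w ++ u) hmem (List.suffix_append w u)
    have hlen := congrArg List.length this
    simp only [List.length_append] at hlen
    exact hw (List.eq_nil_of_length_eq_zero (by omega))

lemma NsumS {u : List A} (hu : u ∈ S) (k : ℕ) : Nsum π S k u = 0 := by
  unfold Nsum
  refine Finset.sum_eq_zero fun w _ => ?_
  unfold bnd
  rw [if_neg]
  intro h
  exact h u hu (List.suffix_append w u)

lemma star (hsum : ∑ a : A, π a = 1) (hcode : SuffixCode S) :
    ∀ (k : ℕ) (u : List A), (∀ t ∈ S, t <:+ u → t = u) →
      Psum π S k u + Nsum π S k u = piW π u := by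
  intro k
  induction k with
  | zero =>
    intro u hu
    have hWW0 : WW A 0 = {([] : List A)} := by
      ext v; simp [mem_WW, List.length_eq_zero_iff]
    have hLL0 : LL A 0 = {([] : List A)} := by
      ext v; simp [mem_LL, List.length_eq_zero_iff]
    unfold Psum Nsum
    rw [hWW0, hLL0, Finset.sum_singleton, Finset.sum_singleton, List.nil_append]
    by_cases hus : u ∈ S
    · unfold ind bnd
      rw [if_pos hus, if_neg]
      · ring
      · intro h; exact h u hus List.suffix_rfl
    · unfold ind bnd
      rw [if_neg hus, if_pos]
      · ring
      · intro t ht hts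
        exact hus ((hu t ht hts) ▸ ht)
  | succ k IH =>
    intro u hu
    by_cases hus : u ∈ S
    · rw [PsumS hcode hus, NsumS hus, add_zero]
    · have hiu : ind π S u = 0 := by unfold ind; rw [if_neg hus]
      have hP : Psum π S (k+1) u = ∑ a : A, Psum π S k (a :: u) := by
        unfold Psum
        rw [sum_WW_succ (fun w => ind π S (w ++ u)) k]
        simp only [List.nil_append, hiu, zero_add]
        refine Finset.sum_congr rfl fun a _ => Finset.sum_congr rfl fun w _ => ?_
        rw [List.append_assoc, List.singleton_append]
      have hN : Nsum π S (k+1) u = ∑ a : A, Nsum π S k (a :: u) := by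
        unfold Nsum
        rw [sum_LL_succ (fun w => bnd π S (w ++ u)) k]
        refine Finset.sum_congr rfl fun a _ => Finset.sum_congr rfl fun w _ => ?_
        rw [List.append_assoc, List.singleton_append]
      rw [hP, hN, ← Finset.sum_add_distrib]
      have : ∀ a : A, Psum π S k (a :: u) + Nsum π S k (a :: u) = piW π (a :: u) := by
        intro a
        refine IH (a :: u) fun t ht hts => ?_
        rcases List.suffix_cons_iff.mp hts with h | h
        · exact h
        · exact absurd ((hu t ht h) ▸ ht) hus
      simp only [this, piW_cons, ← Finset.sum_mul]
      rw [hsum, one_mul]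

variable (hpos : ∀ a : A, 0 < π a) (hS1 : ∑' s : S, piW π s.val = 1)

lemma ind_eq_indicator : ind π S = S.indicator (piW π) := by
  funext v
  by_cases h : v ∈ S <;> simp [ind, h]

include hS1 in
lemma summable_ind : Summable (ind π S) := by
  have h1 : Summable (fun s : S => piW π s.val) := by
    by_contra h
    rw [tsum_eq_zero_of_not_summable h] at hS1
    norm_num at hS1
  rw [ind_eq_indicator]
  exact summable_subtype_iff_indicator.mp h1

include hS1 in
lemma tsum_ind : ∑' v, ind π S v = 1 := by
  rw [ind_eq_indicator, ← tsum_subtype]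
  exact hS1

include hpos hS1 in
lemma summable_Hfun (u : List A) : Summable (Hfun π S u) :=
  Summable.of_nonneg_of_le (Hfun_nonneg hpos u) (Hfun_le_ind hpos u) (summable_ind hS1)

lemma tendsto_WW_sum {f : List A → ℝ} (hf : Summable f) :
    Tendsto (fun k => ∑ v ∈ WW A k, f v) atTop (nhds (∑' v, f v)) := by
  refine hf.hasSum.comp (Filter.tendsto_atTop_finset_of_monotone ?_ ?_)
  · intro a b hab v hv
    rw [mem_WW] at hv ⊢
    omega
  · intro v
    exact ⟨v.length, mem_WW.mpr le_rfl⟩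

lemma Psum_eq_sum_Hfun (k : ℕ) (u : List A) :
    Psum π S k u = ∑ v ∈ WW A (k + u.length), Hfun π S u v := by
  unfold Psum
  have h1 : ∀ w : List A, ind π S (w ++ u) = Hfun π S u (w ++ u) := by
    intro w
    unfold Hfun
    rw [if_pos (List.suffix_append w u)]
  simp only [h1]
  rw [← Finset.sum_image (g := fun w => w ++ u)
    (fun x _ y _ h => (List.append_inj' h rfl).1)]
  refine Finset.sum_subset ?_ ?_
  · intro v hv
    obtain ⟨w, hw, rfl⟩ := Finset.mem_image.mp hv
    rw [mem_WW] at hw ⊢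
    simp only [List.length_append]
    omega
  · intro v hv hvn
    unfold Hfun
    rw [if_neg]
    intro hsuf
    obtain ⟨w, rfl⟩ := hsuf
    refine hvn (Finset.mem_image.mpr ⟨w, ?_, rfl⟩)
    rw [mem_WW] at hv ⊢
    simp only [List.length_append] at hv
    omega

include hpos in
lemma Nsum_le_nil : ∀ (u : List A) (k : ℕ), Nsum π S k u ≤ Nsum π S (k + u.length) [] := by
  intro u
  induction u with
  | nil => intro k; simp [Nsum]
  | cons a u' IH =>
    intro k
    have h1 : Nsum π S k (a :: u') ≤ ∑ b : A, Nsum π S k (b :: u') := by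
      refine Finset.single_le_sum (fun b _ => Nsum_nonneg hpos k (b :: u'))
        (Finset.mem_univ a)
    have h2 : ∑ b : A, Nsum π S k (b :: u') = Nsum π S (k+1) u' := by
      unfold Nsum
      rw [sum_LL_succ (fun w => bnd π S (w ++ u')) k]
      refine (Finset.sum_congr rfl fun b _ => Finset.sum_congr rfl fun w _ => ?_).symm
      rw [List.append_assoc, List.singleton_append]
    have h3 := IH (k+1)
    calc Nsum π S k (a :: u') ≤ Nsum π S (k+1) u' := h1.trans_eq h2
      _ ≤ Nsum π S (k + 1 + u'.length) [] := h3
      _ = Nsum π S (k + (a :: u').length) [] := by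
          congr 1
          simp only [List.length_cons]
          omega

include hS1 in
lemma Psum_nil_tendsto (hsum : ∑ a : A, π a = 1) :
    Tendsto (fun k => Psum π S k []) atTop (nhds 1) := by
  have h1 : ∀ k, Psum π S k [] = ∑ v ∈ WW A k, ind π S v := by
    intro k; unfold Psum; simp only [List.append_nil]
  simp only [h1]
  have := tendsto_WW_sum (summable_ind hS1)
  rwa [tsum_ind hS1] at this

include hS1 in
lemma Nsum_nil_tendsto (hsum : ∑ a : A, π a = 1) (hcode : SuffixCode S) (hSne : [] ∉ S) :
    Tendsto (fun k => Nsum π S k []) atTop (nhds 0) := by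
  have hu : ∀ t ∈ S, t <:+ ([] : List A) → t = [] := fun t _ ht => List.suffix_nil.mp ht
  have hstar : ∀ k, Nsum π S k [] = 1 - Psum π S k [] := by
    intro k
    have := star hsum hcode k [] hu
    rw [piW_nil] at this
    linarith
  simp only [hstar]
  have := (Psum_nil_tendsto hS1 hsum).const_sub 1
  simpa using this

include hpos hS1 in
lemma key (hsum : ∑ a : A, π a = 1) (hcode : SuffixCode S) (hSne : [] ∉ S)
    {u : List A} (hu : ∀ t ∈ S, t <:+ u → t = u) :
    ∑' v, Hfun π S u v = piW π u := by
  have hP : Tendsto (fun k => Psum π S k u) atTop (nhds (∑' v, Hfun π S u v)) := by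
    have h1 : (fun k => Psum π S k u)
        = (fun k => ∑ v ∈ WW A k, Hfun π S u v) ∘ (fun k => k + u.length) := by
      funext k
      exact Psum_eq_sum_Hfun k u
    rw [h1]
    exact (tendsto_WW_sum (summable_Hfun hpos hS1 u)).comp
      (Filter.tendsto_atTop_mono (fun k => Nat.le_add_right k u.length) Filter.tendsto_id)
  have hN : Tendsto (fun k => Nsum π S k u) atTop (nhds 0) := by
    refine squeeze_zero (fun k => Nsum_nonneg hpos k u)
      (fun k => Nsum_le_nil hpos u k) ?_
    exact (Nsum_nil_tendsto hS1 hsum hcode hSne).comp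
      (Filter.tendsto_atTop_mono (fun k => Nat.le_add_right k u.length) Filter.tendsto_id)
  have hsumT : Tendsto (fun k => Psum π S k u + Nsum π S k u) atTop
      (nhds (∑' v, Hfun π S u v + 0)) := hP.add hN
  have hconst : (fun k => Psum π S k u + Nsum π S k u) = fun _ => piW π u := by
    funext k
    exact star hsum hcode k u hu
  rw [hconst] at hsumT
  have := tendsto_nhds_unique hsumT tendsto_const_nhds
  linarith

end Code

end SemaphoreProofAux

open SemaphoreProofAux in
theorem semaphore_stationary_distribution {A : Type*} [Fintype A] [DecidableEq A]
    (π : A → ℝ) (hpos : ∀ a : A, 0 < π a) (hsum : ∑ a : A, π a = 1)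
    (S : Set (List A)) (hSne : [] ∉ S) (hcode : SuffixCode S)
    (hsem : ∀ s ∈ S, ∀ a : A, ∃ t ∈ S, t <:+ s ++ [a])
    (σ : List A → A → List A)
    (hσ : ∀ s ∈ S, ∀ a : A, σ s a ∈ S ∧ σ s a <:+ s ++ [a])
    (hS1 : ∑' s : S, piW π s.val = 1) :
    ∀ s' ∈ S,
      (∑' s : S, ∑ a : A, if σ s.val a = s' then π a * piW π s.val else 0)
        = piW π s' := by
  intro s' hs'
  have hne : s' ≠ [] := fun h => hSne (h ▸ hs')
  set a₀ := s'.getLast hne with ha₀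
  set u := s'.dropLast with hud
  have hsu : u ++ [a₀] = s' := List.dropLast_append_getLast hne
  -- u has no proper suffix in S
  have hu : ∀ t ∈ S, t <:+ u → t = u := by
    intro t ht hts
    obtain ⟨hσS, hσsuf⟩ := hσ t ht a₀
    have h2 : t ++ [a₀] <:+ u ++ [a₀] := by
      obtain ⟨w, hw⟩ := hts
      exact ⟨w, by rw [← List.append_assoc, hw]⟩
    have h3 : σ t a₀ <:+ s' := hsu ▸ hσsuf.trans h2
    have h4 : σ t a₀ = s' := hcode _ hσS s' hs' h3
    have h5 : s'.length ≤ t.length + 1 := by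
      have := hσsuf.length_le
      rw [h4] at this
      simpa using this
    have h6 : s'.length = u.length + 1 := by
      rw [← hsu]; simp
    have h7 : t.length ≤ u.length := hts.length_le
    exact hts.eq_of_length (by omega)
  -- the inner sum
  have hinner : ∀ s : S, (∑ a : A, if σ s.val a = s' then π a * piW π s.val else 0)
      = if u <:+ s.val then π a₀ * piW π s.val else 0 := by
    intro s
    have hiff : ∀ a : A, σ s.val a = s' ↔ (a = a₀ ∧ u <:+ s.val) := by
      intro a
      constructor
      · intro h
        have hsuf : s' <:+ s.val ++ [a] := h ▸ (hσ s.val s.2 a).2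
        rw [← hsu] at hsuf
        obtain ⟨w, hw⟩ := hsuf
        rw [← List.append_assoc] at hw
        obtain ⟨h1, h2⟩ := List.append_inj' hw rfl
        refine ⟨(by simpa using h2.symm), ⟨w, h1⟩⟩
      · rintro ⟨rfl, ⟨w, hw⟩⟩
        have hx : s' <:+ s.val ++ [a₀] := by
          rw [← hsu, ← hw]
          exact ⟨w, (List.append_assoc w u [a₀]).symm⟩
        obtain ⟨hσS, hσsuf⟩ := hσ s.val s.2 a₀
        rcases List.suffix_or_suffix_of_suffix hσsuf hx with h | h
        · exact hcode _ hσS s' hs' h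
        · exact (hcode s' hs' _ hσS h).symm
    by_cases hc : u <:+ s.val
    · simp only [hiff, hc, and_true]
      rw [Finset.sum_ite_eq' Finset.univ a₀ (fun a => π a * piW π s.val)]
      simp
    · simp only [hiff, hc, and_false, if_false]
      simp
  calc (∑' s : S, ∑ a : A, if σ s.val a = s' then π a * piW π s.val else 0)
      = ∑' s : S, (if u <:+ s.val then π a₀ * piW π s.val else 0) := tsum_congr hinner
    _ = ∑' s : S, π a₀ * (if u <:+ s.val then piW π s.val else 0) := by
        refine tsum_congr fun s => ?_
        rw [mul_ite, mul_zero]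
    _ = π a₀ * ∑' s : S, (if u <:+ s.val then piW π s.val else 0) := tsum_mul_left
    _ = π a₀ * ∑' v, Hfun π S u v := by
        congr 1
        have h1 : (∑' s : S, (if u <:+ s.val then piW π s.val else 0))
            = ∑' v, S.indicator (fun v => if u <:+ v then piW π v else 0) v :=
          tsum_subtype S (fun v => if u <:+ v then piW π v else 0)
        rw [h1]
        refine tsum_congr fun v => ?_
        by_cases h2 : v ∈ S <;> by_cases h3 : u <:+ v <;>
          simp [Hfun, ind, h2, h3]
    _ = π a₀ * piW π u := by rw [key hpos hS1 hsum hcode hSne hu]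
    _ = piW π (u ++ [a₀]) := by rw [piW_append, piW_cons, piW_nil]; ring
    _ = piW π s' := by rw [hsu]
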